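/- The Lambert W function satisfies W(x) ≤ log((x + C)/(1 + log C)) for all x > −1/e and all C > 1/e. -/

import Mathlib

theorem stmt_3 (W : ℝ → ℝ)
    (hW : ∀ x : ℝ, -1 / Real.exp 1 < x → W x * Real.exp (W x) = x ∧ -1 ≤ W x) :
    ∀ x : ℝ, -1 / Real.exp 1 < x → ∀ C : ℝ, 1 / Real.exp 1 < C →
      W x ≤ Real.log ((x + C) / (1 + Real.log C)) := by
  intro x hx C hC
  obtain ⟨hxe, _⟩ := hW x hx
  set w := W x with hw
  have hepos : (0:ℝ) < Real.exp 1 := Real.exp_pos 1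
  have hCpos : 0 < C := lt_trans (by positivity) hC
  have hlogC : -1 < Real.log C := by
    have := Real.log_lt_log (by positivity) hC
    rw [Real.log_div one_ne_zero (ne_of_gt hepos), Real.log_one, Real.log_exp] at this
    linarith
  have hden : 0 < 1 + Real.log C := by linarith
  have hxC : 0 < x + C := by
    have h0 : -1 / Real.exp 1 + 1 / Real.exp 1 < x + C := add_lt_add hx hC
    have h1 : -1 / Real.exp 1 + 1 / Real.exp 1 = 0 := by field_simp; ring
    linarith
  -- key inequality: exp w * (1 + log C) ≤ x + C
  have key : Real.exp w * (1 + Real.log C) ≤ x + C := by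
    have h1 : (Real.log C - w) + 1 ≤ Real.exp (Real.log C - w) :=
      Real.add_one_le_exp _
    have h2 : Real.exp (Real.log C - w) = C / Real.exp w := by
      rw [Real.exp_sub, Real.exp_log hCpos]
    rw [h2] at h1
    have hew : 0 < Real.exp w := Real.exp_pos w
    have := mul_le_mul_of_nonneg_left h1 hew.le
    rw [mul_div_cancel₀ _ (ne_of_gt hew)] at this
    nlinarith [this, hxe]
  have h3 : Real.exp w ≤ (x + C) / (1 + Real.log C) :=
    (le_div_iff₀ hden).mpr key
  calc w = Real.log (Real.exp w) := (Real.log_exp w).symm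
    _ ≤ Real.log ((x + C) / (1 + Real.log C)) := Real.log_le_log (Real.exp_pos w) h3
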